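/- Let p_1,...,p_m, q be in the open unit disk with d̂ = max_i |p_i - q| < 1. Then ∑_{k=1}^m ∑_{S ⊆ I_m, |S|=k} ∑_{i=1}^k ∑_{T ⊆ S, |T|=i} |q|^{k-i} ∏_{j∈T} |p_j - q| ≤ ((|q|+2)^m - (|q|+1)^m) · d̂. -/

import Mathlib

open Finset

lemma sum_choose_pow (x : ℝ) (n : ℕ) :
    ∑ i ∈ Finset.Icc 1 n, (n.choose i : ℝ) * x ^ i = (x + 1) ^ n - 1 := by
  have h : Finset.Icc 1 n = (Finset.range (n+1)).erase 0 := by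
    ext i; simp [Nat.lt_succ_iff]; omega
  rw [h, Finset.sum_erase_eq_sub (Finset.mem_range.2 (Nat.succ_pos n)), add_pow]
  simp [mul_comm]

lemma sum_choose_pow' (x : ℝ) (n : ℕ) :
    ∑ i ∈ Finset.Icc 1 n, (n.choose i : ℝ) * x ^ (n - i) = (x + 1) ^ n - x ^ n := by
  have h : Finset.Icc 1 n = (Finset.range (n+1)).erase 0 := by
    ext i; simp [Nat.lt_succ_iff]; omega
  have h2 : (x+1)^n = ∑ i ∈ Finset.range (n+1), (n.choose i : ℝ) * x^(n-i) := by
    rw [add_comm, add_pow]; simp [mul_comm]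
  rw [h, Finset.sum_erase_eq_sub (Finset.mem_range.2 (Nat.succ_pos n)), h2]
  simp

theorem quadruple_sum_bound (m : ℕ) (hm : 0 < m) (p : Fin m → ℂ) (q : ℂ) (d : ℝ)
    (hp : ∀ i, ‖p i‖ < 1) (hq : ‖q‖ < 1)
    (hd : IsGreatest (Set.range fun i => ‖p i - q‖) d) (hd1 : d < 1) :
    ∑ k ∈ Finset.Icc 1 m, ∑ S ∈ Finset.powersetCard k (Finset.univ : Finset (Fin m)),
      ∑ i ∈ Finset.Icc 1 k, ∑ T ∈ Finset.powersetCard i S,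
        ‖q‖ ^ (k - i) * ∏ j ∈ T, ‖p j - q‖
      ≤ ((‖q‖ + 2) ^ m - (‖q‖ + 1) ^ m) * d := by
  obtain ⟨hmem, hub⟩ := hd
  obtain ⟨i0, hi0⟩ := hmem
  have hd0 : 0 ≤ d := hi0 ▸ norm_nonneg _
  set a := ‖q‖ with ha
  have ha0 : 0 ≤ a := norm_nonneg q
  have key : ∀ i : Fin m, ‖p i - q‖ ≤ d := fun i => hub ⟨i, rfl⟩
  have step1 : ∑ k ∈ Finset.Icc 1 m, ∑ S ∈ Finset.powersetCard k (Finset.univ : Finset (Fin m)),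
      ∑ i ∈ Finset.Icc 1 k, ∑ T ∈ Finset.powersetCard i S,
        a ^ (k - i) * ∏ j ∈ T, ‖p j - q‖
      ≤ ∑ k ∈ Finset.Icc 1 m, ∑ S ∈ Finset.powersetCard k (Finset.univ : Finset (Fin m)),
      ∑ i ∈ Finset.Icc 1 k, ∑ T ∈ Finset.powersetCard i S, a ^ (k - i) * d := by
    gcongr ∑ k ∈ _, ∑ S ∈ _, ∑ i ∈ _, ∑ T ∈ _, a ^ (k-i) * ?_ with k hk S hS i hi T hT
    · -- ∏ j ∈ T, |p j - q| ≤ d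
      have hTcard : T.card = i := (Finset.mem_powersetCard.1 hT).2
      have h1 : ∏ j ∈ T, ‖p j - q‖ ≤ ∏ _j ∈ T, d :=
        Finset.prod_le_prod (fun j _ => norm_nonneg _) (fun j _ => key j)
      rw [Finset.prod_const, hTcard] at h1
      refine h1.trans ?_
      calc d ^ i ≤ d ^ 1 := pow_le_pow_of_le_one hd0 hd1.le (Finset.mem_Icc.1 hi).1
        _ = d := pow_one d
  refine step1.trans ?_
  have step2 : ∀ k ∈ Finset.Icc 1 m,
      ∑ S ∈ Finset.powersetCard k (Finset.univ : Finset (Fin m)),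
        ∑ i ∈ Finset.Icc 1 k, ∑ T ∈ Finset.powersetCard i S, a ^ (k - i) * d
      = (m.choose k : ℝ) * (((a+1)^k - a^k) * d) := by
    intro k hk
    have : ∀ S ∈ Finset.powersetCard k (Finset.univ : Finset (Fin m)),
        ∑ i ∈ Finset.Icc 1 k, ∑ T ∈ Finset.powersetCard i S, a ^ (k - i) * d
        = ((a+1)^k - a^k) * d := by
      intro S hS
      have hScard : S.card = k := (Finset.mem_powersetCard.1 hS).2
      have : ∀ i ∈ Finset.Icc 1 k,
          ∑ T ∈ Finset.powersetCard i S, a ^ (k - i) * d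
          = (k.choose i : ℝ) * (a ^ (k - i)) * d := by
        intro i hi
        rw [Finset.sum_const, Finset.card_powersetCard, hScard, nsmul_eq_mul, mul_assoc]
      rw [Finset.sum_congr rfl this, ← sum_choose_pow' a k, Finset.sum_mul]
    rw [Finset.sum_congr rfl this, Finset.sum_const, Finset.card_powersetCard,
      Finset.card_univ, Fintype.card_fin, nsmul_eq_mul]
  rw [Finset.sum_congr rfl step2]
  have expand : ∑ k ∈ Finset.Icc 1 m, (m.choose k : ℝ) * (((a+1)^k - a^k) * d)
      = ((∑ k ∈ Finset.Icc 1 m, (m.choose k : ℝ) * (a+1)^k)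
        - ∑ k ∈ Finset.Icc 1 m, (m.choose k : ℝ) * a^k) * d := by
    rw [← Finset.sum_sub_distrib, Finset.sum_mul]
    exact Finset.sum_congr rfl (fun k _ => by ring)
  rw [expand, sum_choose_pow, sum_choose_pow]
  ring_nf
  exact le_refl _
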